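/- For every natural number n ≥ 3 and every S with 1 ≤ S ≤ 2^n − 1, the number of XOR-triples contained in {1, 2, …, 2^n − 1} that do NOT contain S equals (2^n − 2)(2^n − 4)/6, which moreover equals 4 · ((2^{n−1} − 1)(2^{n−1} − 2)/6). -/

import Mathlib

/-- An XOR-triple is a 3-element set of positive natural numbers `{a, b, c}`
with `a ^^^ b = c`; this condition is symmetric in `a`, `b`, `c`. -/
def IsXorTriple (t : Finset ℕ) : Prop :=
  t.card = 3 ∧ (∀ x ∈ t, 0 < x) ∧ ∃ a ∈ t, ∃ b ∈ t, a ≠ b ∧ a ^^^ b ∈ t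

instance : DecidablePred IsXorTriple := fun t => by
  unfold IsXorTriple; infer_instance

private lemma xor_lt_two_pow' {a b n : ℕ} (ha : a < 2 ^ n) (hb : b < 2 ^ n) :
    a ^^^ b < 2 ^ n := by
  apply Nat.lt_pow_two_of_testBit
  intro i hi
  rw [Nat.testBit_xor,
    Nat.testBit_lt_two_pow (lt_of_lt_of_le ha (Nat.pow_le_pow_right (by norm_num) hi)),
    Nat.testBit_lt_two_pow (lt_of_lt_of_le hb (Nat.pow_le_pow_right (by norm_num) hi))]
  rfl

private lemma two_pow_mod_six (m : ℕ) (hm : 1 ≤ m) : 2 ^ m % 6 = 2 ∨ 2 ^ m % 6 = 4 := by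
  induction m with
  | zero => omega
  | succ k ih =>
    rcases Nat.eq_zero_or_pos k with hk | hk
    · subst hk; left; rfl
    · rcases ih hk with h | h <;> [right; left] <;> rw [pow_succ] <;> omega

private lemma xor_ne_left {a b : ℕ} (hb : b ≠ 0) : a ^^^ b ≠ a := by
  intro h
  have := xor_cancel_left a b
  rw [h, Nat.xor_self] at this
  exact hb this.symm

set_option maxHeartbeats 1600000 in
theorem xor_triples_avoiding_S (n S : ℕ) (hn : 3 ≤ n) (hS1 : 1 ≤ S) (hS : S ≤ 2 ^ n - 1) :
    ((Finset.Icc 1 (2 ^ n - 1)).powerset.filter (fun t => IsXorTriple t ∧ S ∉ t)).card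
        = (2 ^ n - 2) * (2 ^ n - 4) / 6 ∧
    (2 ^ n - 2) * (2 ^ n - 4) / 6 = 4 * ((2 ^ (n - 1) - 1) * (2 ^ (n - 1) - 2) / 6) := by
  have hM8 : 8 ≤ 2 ^ n := by
    calc (8:ℕ) = 2 ^ 3 := rfl
    _ ≤ 2 ^ n := Nat.pow_le_pow_right (by norm_num) hn
  set M := 2 ^ n with hMdef
  set I := Finset.Icc 1 (M - 1) with hIdef
  have hmemI : ∀ x, x ∈ I ↔ 0 < x ∧ x < M := by
    intro x; rw [hIdef, Finset.mem_Icc]; omega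
  have hSM : S < M := by omega
  have hS0 : S ≠ 0 := by omega
  have hSI : S ∈ I := (hmemI S).2 ⟨by omega, hSM⟩
  have hIcard : I.card = M - 1 := by rw [hIdef, Nat.card_Icc]; omega
  set T := (I.powerset.filter (fun t => IsXorTriple t ∧ S ∉ t)) with hTdef
  have hmemT : ∀ t, t ∈ T ↔ t ⊆ I ∧ IsXorTriple t ∧ S ∉ t := by
    intro t
    rw [hTdef, Finset.mem_filter, Finset.mem_powerset]
  set P := ((I ×ˢ I).filter
    (fun p => p.1 ≠ p.2 ∧ p.1 ≠ S ∧ p.2 ≠ S ∧ p.1 ^^^ p.2 ≠ S)) with hPdef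
  have hmemP : ∀ p : ℕ × ℕ, p ∈ P ↔
      p.1 ∈ I ∧ p.2 ∈ I ∧ p.1 ≠ p.2 ∧ p.1 ≠ S ∧ p.2 ≠ S ∧ p.1 ^^^ p.2 ≠ S := by
    intro p
    rw [hPdef, Finset.mem_filter, Finset.mem_product]
    tauto
  -- closure: in an xor triple, the xor of any two distinct elements recovers the set
  have hclos : ∀ t ∈ T, ∀ x ∈ t, ∀ y ∈ t, x ≠ y →
      insert x (insert y {x ^^^ y}) = t := by
    intro t ht x hx y hy hxy
    obtain ⟨hsub, ⟨hcard, hpos, a, ha, b, hb, hab, hc⟩, hSnot⟩ := (hmemT t).1 ht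
    have ha0 : a ≠ 0 := (hpos a ha).ne'
    have hb0 : b ≠ 0 := (hpos b hb).ne'
    have hca : a ^^^ b ≠ a := xor_ne_left hb0
    have hcb : a ^^^ b ≠ b := by
      rw [Nat.xor_comm]; exact xor_ne_left ha0
    have hsub3 : ({a, b, a ^^^ b} : Finset ℕ) ⊆ t := by
      intro z hz
      rw [Finset.mem_insert, Finset.mem_insert, Finset.mem_singleton] at hz
      rcases hz with rfl | rfl | rfl <;> assumption
    have hcard3 : ({a, b, a ^^^ b} : Finset ℕ).card = 3 := by
      rw [Finset.card_insert_of_notMem (by simp [hab, Ne.symm hca]),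
        Finset.card_insert_of_notMem (by simp [Ne.symm hcb]), Finset.card_singleton]
    have hteq : t = {a, b, a ^^^ b} :=
      (Finset.eq_of_subset_of_card_le hsub3 (by omega)).symm
    subst hteq
    rw [Finset.mem_insert, Finset.mem_insert, Finset.mem_singleton] at hx hy
    have e1 : a ^^^ (a ^^^ b) = b := xor_cancel_left a b
    have e2 : b ^^^ (a ^^^ b) = a := by
      rw [Nat.xor_comm a b]; exact xor_cancel_left b a
    have e3 : (a ^^^ b) ^^^ a = b := by rw [Nat.xor_comm]; exact e1
    have e4 : (a ^^^ b) ^^^ b = a := by rw [Nat.xor_comm]; exact e2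
    have e5 : b ^^^ a = a ^^^ b := Nat.xor_comm b a
    rcases hx with rfl | rfl | rfl <;> rcases hy with rfl | rfl | rfl
    · exact absurd rfl hxy
    · rfl
    · rw [e1, Finset.pair_comm]
    · rw [e5]
      ext z; simp only [Finset.mem_insert, Finset.mem_singleton]; tauto
    · exact absurd rfl hxy
    · rw [e2]
      ext z; simp only [Finset.mem_insert, Finset.mem_singleton]; tauto
    · rw [e3]
      ext z; simp only [Finset.mem_insert, Finset.mem_singleton]; tauto
    · rw [e4]
      ext z; simp only [Finset.mem_insert, Finset.mem_singleton]; tauto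
    · exact absurd rfl hxy
  -- the triple-forming map
  have hfP : ∀ p ∈ P, insert p.1 (insert p.2 {p.1 ^^^ p.2}) ∈ T := by
    intro p hp
    obtain ⟨h1I, h2I, hne, h1S, h2S, hxS⟩ := (hmemP p).1 hp
    obtain ⟨h10, h1M⟩ := (hmemI p.1).1 h1I
    obtain ⟨h20, h2M⟩ := (hmemI p.2).1 h2I
    have hx0 : p.1 ^^^ p.2 ≠ 0 := by
      exact fun h => hne (xor_eq_zero_iff.1 h)
    have hxI : p.1 ^^^ p.2 ∈ I :=
      (hmemI _).2 ⟨Nat.pos_of_ne_zero hx0, xor_lt_two_pow' h1M h2M⟩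
    have hc1 : p.1 ^^^ p.2 ≠ p.1 := xor_ne_left h20.ne'
    have hc2 : p.1 ^^^ p.2 ≠ p.2 := by
      rw [Nat.xor_comm]; exact xor_ne_left h10.ne'
    rw [hmemT]
    refine ⟨?_, ⟨?_, ?_, p.1, ?_, p.2, ?_, hne, ?_⟩, ?_⟩
    · intro z hz
      rw [Finset.mem_insert, Finset.mem_insert, Finset.mem_singleton] at hz
      rcases hz with rfl | rfl | rfl <;> assumption
    · rw [Finset.card_insert_of_notMem (by simp [hne, Ne.symm hc1]),
        Finset.card_insert_of_notMem (by simp [Ne.symm hc2]), Finset.card_singleton]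
    · intro z hz
      rw [Finset.mem_insert, Finset.mem_insert, Finset.mem_singleton] at hz
      rcases hz with rfl | rfl | rfl
      · exact h10
      · exact h20
      · exact Nat.pos_of_ne_zero hx0
    · simp
    · simp
    · simp
    · intro hmem
      rw [Finset.mem_insert, Finset.mem_insert, Finset.mem_singleton] at hmem
      rcases hmem with rfl | rfl | h
      · exact h1S rfl
      · exact h2S rfl
      · exact hxS h.symm
  -- fibers of the triple-forming map have size 6
  have hfib : ∀ t ∈ T,
      (P.filter (fun p => insert p.1 (insert p.2 {p.1 ^^^ p.2}) = t)).card = 6 := by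
    intro t ht
    obtain ⟨hsub, ⟨hcard, hpos, _⟩, hSnot⟩ := (hmemT t).1 ht
    have key : P.filter (fun p => insert p.1 (insert p.2 {p.1 ^^^ p.2}) = t) = t.offDiag := by
      ext p
      rw [Finset.mem_filter, Finset.mem_offDiag]
      constructor
      · rintro ⟨hp, heq⟩
        obtain ⟨_, _, hne, _⟩ := (hmemP p).1 hp
        refine ⟨?_, ?_, hne⟩
        · rw [← heq]; exact Finset.mem_insert_self _ _
        · rw [← heq]; exact Finset.mem_insert_of_mem (Finset.mem_insert_self _ _)
      · rintro ⟨h1, h2, hne⟩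
        have heq := hclos t ht p.1 h1 p.2 h2 hne
        have hxt : p.1 ^^^ p.2 ∈ t := by
          rw [← heq]
          exact Finset.mem_insert_of_mem (Finset.mem_insert_of_mem (Finset.mem_singleton_self _))
        refine ⟨(hmemP p).2 ⟨hsub h1, hsub h2, hne, ?_, ?_, ?_⟩, heq⟩
        · rintro rfl; exact hSnot h1
        · rintro rfl; exact hSnot h2
        · rintro rfl; exact hSnot hxt
    rw [key, Finset.offDiag_card, hcard]
  have hPT : P.card = 6 * T.card := by
    rw [Finset.card_eq_sum_card_fiberwise hfP, Finset.sum_congr rfl hfib,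
      Finset.sum_const, smul_eq_mul, mul_comm]
  -- count P fiberwise over the first coordinate
  have hfst : ∀ p ∈ P, p.1 ∈ I.erase S := by
    intro p hp
    obtain ⟨h1I, _, _, h1S, _⟩ := (hmemP p).1 hp
    exact Finset.mem_erase.2 ⟨h1S, h1I⟩
  have hfib2 : ∀ a ∈ I.erase S, (P.filter (fun p => p.1 = a)).card = M - 4 := by
    intro a ha
    obtain ⟨haS, haI⟩ := Finset.mem_erase.1 ha
    obtain ⟨ha0, haM⟩ := (hmemI a).1 haI
    have hxS0 : a ^^^ S ≠ 0 := fun h => haS (xor_eq_zero_iff.1 h)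
    have hxSI : a ^^^ S ∈ I := (hmemI _).2 ⟨Nat.pos_of_ne_zero hxS0, xor_lt_two_pow' haM hSM⟩
    have hxSa : a ^^^ S ≠ a := xor_ne_left hS0
    have hxSS : a ^^^ S ≠ S := by rw [Nat.xor_comm]; exact xor_ne_left ha0.ne'
    have key : P.filter (fun p => p.1 = a) =
        Finset.map ⟨fun b => (a, b), fun x y h => by simpa using h⟩
          ((((I.erase S).erase a).erase (a ^^^ S))) := by
      ext p
      rw [Finset.mem_filter, Finset.mem_map]
      constructor
      · rintro ⟨hp, hpa⟩
        obtain ⟨h1I, h2I, hne, h1S, h2S, hxS⟩ := (hmemP p).1 hp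
        refine ⟨p.2, ?_, ?_⟩
        · rw [Finset.mem_erase, Finset.mem_erase, Finset.mem_erase]
          refine ⟨?_, ?_, h2S, h2I⟩
          · intro h
            exact hxS (by rw [hpa, h, xor_cancel_left])
          · rw [← hpa]; exact Ne.symm hne
        · show (a, p.2) = p
          exact Prod.ext hpa.symm rfl
      · rintro ⟨b, hb, rfl⟩
        show (a, b) ∈ P ∧ (a, b).1 = a
        rw [Finset.mem_erase, Finset.mem_erase, Finset.mem_erase] at hb
        obtain ⟨hbx, hba, hbS, hbI⟩ := hb
        refine ⟨(hmemP _).2 ⟨haI, hbI, Ne.symm hba, haS, hbS, ?_⟩, by trivial⟩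
        intro h
        exact hbx (by rw [← h, xor_cancel_left])
    rw [key, Finset.card_map, Finset.card_erase_of_mem, Finset.card_erase_of_mem,
      Finset.card_erase_of_mem hSI, hIcard]
    · omega
    · exact Finset.mem_erase.2 ⟨haS, haI⟩
    · exact Finset.mem_erase.2 ⟨hxSa, Finset.mem_erase.2 ⟨hxSS, hxSI⟩⟩
  have hPcard : P.card = (M - 2) * (M - 4) := by
    rw [Finset.card_eq_sum_card_fiberwise hfst, Finset.sum_congr rfl hfib2,
      Finset.sum_const, smul_eq_mul, Finset.card_erase_of_mem hSI, hIcard,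
      show M - 1 - 1 = M - 2 by omega]
  have h6 : 6 * T.card = (M - 2) * (M - 4) := by rw [← hPT, hPcard]
  -- arithmetic part
  set K := 2 ^ (n - 1) with hKdef
  have hMK : M = 2 * K := by
    rw [hMdef, hKdef, ← pow_succ']
    congr 1
    omega
  have hK4 : 4 ≤ K := by
    calc (4:ℕ) = 2 ^ 2 := rfl
    _ ≤ 2 ^ (n - 1) := Nat.pow_le_pow_right (by norm_num) (by omega)
  have hdvd : 6 ∣ (K - 1) * (K - 2) := by
    rcases two_pow_mod_six (n - 1) (by omega) with h | h
    · have : (6:ℕ) ∣ K - 2 := by omega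
      exact Dvd.dvd.mul_left this _
    · have h3 : (3:ℕ) ∣ K - 1 := by omega
      have h2 : (2:ℕ) ∣ K - 2 := by omega
      have : (3 * 2 : ℕ) ∣ (K - 1) * (K - 2) :=
        mul_dvd_mul h3 h2
      simpa using this
  have harith : (M - 2) * (M - 4) / 6 = 4 * ((K - 1) * (K - 2) / 6) := by
    have e1 : M - 2 = 2 * (K - 1) := by omega
    have e2 : M - 4 = 2 * (K - 2) := by omega
    rw [e1, e2, show 2 * (K - 1) * (2 * (K - 2)) = 4 * ((K - 1) * (K - 2)) by ring,
      Nat.mul_div_assoc 4 hdvd]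
  exact ⟨by omega, harith⟩
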